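/- If (k₁,k₂) is generic, then for every partition μ of n the point λ = λ(μ,k) ∈ ℝⁿ is a residual point for (Bₙ,k); that is, the number of roots α ∈ R(Bₙ) with α(λ) = k(α) exceeds the number of roots α ∈ R(Bₙ) with α(λ) = 0 by exactly n. -/

import Mathlib

/- STATEMENT 16: For the root system `R(Bₙ) ⊂ (ℝⁿ)*` of type `Bₙ` (long roots `±e_i ± e_j`,
short roots `±e_i`) with generic parameters `k(long) = k₁`, `k(short) = k₂`, every point
`λ(μ, k)` attached to a partition `μ` of `n` is a residual point: the number of roots `α`
with `α(λ) = k(α)` exceeds the number of roots `α` with `α(λ) = 0` by exactly `n`. -/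

noncomputable section
open Classical

/-- The coordinate vector `e_i ∈ ℝⁿ`, regarded as the coordinate functional on `ℝⁿ`. -/
def stdE (n : ℕ) (i : Fin n) : Fin n → ℝ := Pi.single i 1

/-- The root system of type `Bₙ`: the long roots `±e_i ± e_j` (`i ≠ j`) and the short
roots `±e_i`. -/
def rootsBn (n : ℕ) : Set (Fin n → ℝ) :=
  {v | (∃ i j : Fin n, i ≠ j ∧
          (v = stdE n i + stdE n j ∨ v = stdE n i - stdE n j ∨ v = -(stdE n i + stdE n j)))
    ∨ (∃ i : Fin n, v = stdE n i ∨ v = -stdE n i)}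

/-- The parameter function: `k₂` on short roots, `k₁` on long roots. -/
def kBn (n : ℕ) (k₁ k₂ : ℝ) (v : Fin n → ℝ) : ℝ :=
  if ∃ i : Fin n, v = stdE n i ∨ v = -stdE n i then k₂ else k₁

/-- Evaluation `α(λ)` of the functional `α` at the point `λ`. -/
def evalRoot (n : ℕ) (α lam : Fin n → ℝ) : ℝ := ∑ i, α i * lam i

/-- Genericity of the parameters `(k₁, k₂)` for `Bₙ`. -/
def BnGeneric (n : ℕ) (k₁ k₂ : ℝ) : Prop :=
  k₁ * k₂ * ∏ j ∈ Finset.Icc 1 (2 * (n - 1)),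
    (((j : ℝ) * k₁ + 2 * k₂) * ((j : ℝ) * k₁ - 2 * k₂)) ≠ 0

/-- `l` is the list of column lengths `μ₁ ≥ μ₂ ≥ … ≥ μ_d > 0` of a partition of `n`. -/
def IsPartitionOf (n : ℕ) (l : List ℕ) : Prop :=
  l.Pairwise (· ≥ ·) ∧ (∀ p ∈ l, 0 < p) ∧ l.sum = n

/-- The multiset of the numbers `h(b)·k₁ + k₂ = (j - i)·k₁ + k₂` over the boxes `b` of the
Young diagram whose `i`-th column has `l_i` boxes (indices starting from `0`). -/
def heightCoords (k₁ k₂ : ℝ) (l : List ℕ) : Multiset ℝ :=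
  ↑(l.zipIdx.flatMap fun p => (List.range p.1).map fun j => ((j : ℝ) - (p.2 : ℝ)) * k₁ + k₂)

/-- `x` is a vector `λ(μ, k) ∈ ℝⁿ` attached to the partition `μ = l`. -/
def IsLambdaVec (n : ℕ) (k₁ k₂ : ℝ) (l : List ℕ) (x : Fin n → ℝ) : Prop :=
  (↑(List.ofFn x) : Multiset ℝ) = heightCoords k₁ k₂ l


/-- Heights multiset of a partition given as list of column lengths. -/
def hts : List ℕ → Multiset ℤ
  | [] => 0
  | p :: l => Multiset.map (fun j : ℕ => (j : ℤ)) (Multiset.range p) + (hts l).map (· - 1)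

/-- indicator sum equals count -/
lemma sum_map_indic (F : Multiset ℤ) (b : ℤ) :
    (F.map fun a => if a = b then (1:ℕ) else 0).sum = F.count b := by
  induction F using Multiset.induction with
  | empty => simp
  | cons c F ih =>
      rw [Multiset.map_cons, Multiset.sum_cons, ih, Multiset.count_cons]
      by_cases h : c = b
      · subst h; simp; omega
      · have h' : ¬ b = c := fun hh => h hh.symm
        simp [h, h']

/-- Fubini for pair counting. -/
lemma fub (E F : Multiset ℤ) :
    (E.map fun b => F.count b).sum = (F.map fun a => E.count a).sum := by
  induction E using Multiset.induction with
  | empty => simp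
  | cons b E ih =>
      rw [Multiset.map_cons, Multiset.sum_cons, ih]
      have : (F.map fun a => (b ::ₘ E).count a) =
          F.map fun a => E.count a + if a = b then 1 else 0 := by
        apply Multiset.map_congr rfl; intro a _; rw [Multiset.count_cons]
      rw [this, Multiset.sum_map_add, sum_map_indic]; ring

def SS (M : Multiset ℤ) : ℕ := (M.map fun a => M.count a).sum
def SU (M : Multiset ℤ) : ℕ := (M.map fun a => M.count (a + 1)).sum

lemma count_map_shift (M : Multiset ℤ) (t a : ℤ) :
    (M.map fun b => b + t).count a = M.count (a - t) := by
  have h1 : a = (a - t) + t := by ring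
  rw [h1]
  have := Multiset.count_map_eq_count' (fun b : ℤ => b + t) M
    (fun u v h => by dsimp at h; omega) (a - t)
  simpa using this

lemma SS_shift (M : Multiset ℤ) (t : ℤ) : SS (M.map fun b => b + t) = SS M := by
  unfold SS
  rw [Multiset.map_map]
  apply congrArg
  apply Multiset.map_congr rfl
  intro a _
  show (M.map fun b => b + t).count (a + t) = M.count a
  rw [count_map_shift]; congr 1 <;> omega

lemma SU_shift (M : Multiset ℤ) (t : ℤ) : SU (M.map fun b => b + t) = SU M := by
  unfold SU
  rw [Multiset.map_map]
  apply congrArg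
  apply Multiset.map_congr rfl
  intro a _
  show (M.map fun b => b + t).count (a + t + 1) = M.count (a + 1)
  rw [count_map_shift]; congr 1 <;> omega

/-- telescoping 1 -/
lemma tele1 (c : ℤ → ℕ) (p : ℕ) :
    ((List.range p).map fun j : ℕ => c ((j:ℤ) + 1)).sum + c 0
      = ((List.range p).map fun j : ℕ => c ((j:ℤ))).sum + c p := by
  induction p with
  | zero => simp
  | succ p ih =>
      rw [List.range_succ]
      simp only [List.map_append, List.sum_append, List.map_cons, List.map_nil,
        List.sum_cons, List.sum_nil]
      push_cast
      omega

/-- telescoping 2 -/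
lemma tele2 (c : ℤ → ℕ) (p : ℕ) :
    ((List.range p).map fun j : ℕ => c ((j:ℤ) - 1)).sum + c ((p:ℤ) - 1)
      = ((List.range p).map fun j : ℕ => c ((j:ℤ))).sum + c (-1) := by
  induction p with
  | zero => simp
  | succ p ih =>
      rw [List.range_succ]
      simp only [List.map_append, List.sum_append, List.map_cons, List.map_nil,
        List.sum_cons, List.sum_nil]
      push_cast
      simp only [add_sub_cancel_right]
      omega

/-- every height is strictly below some part -/
lemma hts_lt_part {l : List ℕ} {a : ℤ} (ha : a ∈ hts l) : ∃ q ∈ l, a < q := by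
  induction l generalizing a with
  | nil => simp [hts] at ha
  | cons p l ih =>
      rw [hts, Multiset.mem_add] at ha
      rcases ha with h | h
      · rcases Multiset.mem_map.mp h with ⟨j, hj, rfl⟩
        exact ⟨p, List.mem_cons_self, by exact_mod_cast Multiset.mem_range.mp hj⟩
      · rcases Multiset.mem_map.mp h with ⟨b, hb, rfl⟩
        rcases ih hb with ⟨q, hq, hlt⟩
        exact ⟨q, List.mem_cons_of_mem _ hq, by omega⟩

lemma hts_bounds {l : List ℕ} {a : ℤ} (ha : a ∈ hts l) :
    -(l.length : ℤ) < a ∧ a < l.sum := by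
  induction l generalizing a with
  | nil => simp [hts] at ha
  | cons p l ih =>
      rw [hts, Multiset.mem_add] at ha
      simp only [List.length_cons, List.sum_cons]
      rcases ha with h | h
      · rcases Multiset.mem_map.mp h with ⟨j, hj, rfl⟩
        have := Multiset.mem_range.mp hj
        omega
      · rcases Multiset.mem_map.mp h with ⟨b, hb, rfl⟩
        have := ih hb
        omega

lemma count_range_coe (p : ℕ) (a : ℤ) :
    (Multiset.map (fun j : ℕ => (j : ℤ)) (Multiset.range p)).count a
      = if 0 ≤ a ∧ a < p then 1 else 0 := by
  have hnd : (Multiset.map (fun j : ℕ => (j : ℤ)) (Multiset.range p)).Nodup :=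
    (Multiset.nodup_range p).map (fun u v h => by exact_mod_cast h)
  by_cases h : 0 ≤ a ∧ a < p
  · rw [if_pos h]
    apply Multiset.count_eq_one_of_mem hnd
    exact Multiset.mem_map.mpr ⟨a.toNat, Multiset.mem_range.mpr (by omega), by omega⟩
  · rw [if_neg h, Multiset.count_eq_zero]
    intro hmem
    rcases Multiset.mem_map.mp hmem with ⟨j, hj, rfl⟩
    have := Multiset.mem_range.mp hj
    omega

lemma SS_add_expand (R E : Multiset ℤ) :
    SS (R + E) = ((R.map fun a => R.count a).sum + (R.map fun a => E.count a).sum)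
      + ((E.map fun a => R.count a).sum + (E.map fun a => E.count a).sum) := by
  unfold SS
  rw [Multiset.map_add, Multiset.sum_add]
  have h1 : (R.map fun a => (R + E).count a) = R.map fun a => R.count a + E.count a :=
    Multiset.map_congr rfl (by intro a _; rw [Multiset.count_add])
  have h2 : (E.map fun a => (R + E).count a) = E.map fun a => R.count a + E.count a :=
    Multiset.map_congr rfl (by intro a _; rw [Multiset.count_add])
  rw [h1, h2, Multiset.sum_map_add, Multiset.sum_map_add]

lemma SU_add_expand (R E : Multiset ℤ) :
    SU (R + E) = ((R.map fun a => R.count (a+1)).sum + (R.map fun a => E.count (a+1)).sum)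
      + ((E.map fun a => R.count (a+1)).sum + (E.map fun a => E.count (a+1)).sum) := by
  unfold SU
  rw [Multiset.map_add, Multiset.sum_add]
  have h1 : (R.map fun a => (R + E).count (a+1)) = R.map fun a => R.count (a+1) + E.count (a+1) :=
    Multiset.map_congr rfl (by intro a _; rw [Multiset.count_add])
  have h2 : (E.map fun a => (R + E).count (a+1)) = E.map fun a => R.count (a+1) + E.count (a+1) :=
    Multiset.map_congr rfl (by intro a _; rw [Multiset.count_add])
  rw [h1, h2, Multiset.sum_map_add, Multiset.sum_map_add]

lemma map_range_sum (p : ℕ) (g : ℤ → ℕ) :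
    ((Multiset.map (fun j : ℕ => (j:ℤ)) (Multiset.range p)).map g).sum
      = ((List.range p).map fun j : ℕ => g (j:ℤ)).sum := by
  rw [Multiset.map_map]
  rfl

theorem keyIdentity : ∀ (l : List ℕ), l.Pairwise (· ≥ ·) → (∀ q ∈ l, 0 < q) →
    SS (hts l) = (hts l).count 0 + SU (hts l) := by
  intro l
  induction l with
  | nil => intro _ _; simp [hts, SS, SU]
  | cons p l ih =>
      intro hs hpos
      have hsl : l.Pairwise (· ≥ ·) := hs.of_cons
      have hple : ∀ q ∈ l, q ≤ p := (List.pairwise_cons.mp hs).1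
      have hposl : ∀ q ∈ l, 0 < q := fun q hq => hpos q (List.mem_cons_of_mem _ hq)
      have hp1 : 1 ≤ p := hpos p (List.mem_cons_self)
      set R : Multiset ℤ := Multiset.map (fun j : ℕ => (j:ℤ)) (Multiset.range p) with hR
      set E : Multiset ℤ := (hts l).map (· - 1) with hEdef
      have hH : hts (p :: l) = R + E := rfl
      set c : ℤ → ℕ := fun a => E.count a with hc
      -- E is a (+ -1) shift of hts l
      have hEshift : E = (hts l).map (fun b => b + (-1)) := by
        apply Multiset.map_congr rfl; intro b _; ring
      -- elements of E are < p - 1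
      have hElt : ∀ a ∈ E, a < (p:ℤ) - 1 := by
        intro a ha
        rcases Multiset.mem_map.mp ha with ⟨b, hb, rfl⟩
        rcases hts_lt_part hb with ⟨q, hq, hlt⟩
        have := hple q hq
        omega
      have hcp : c (p:ℤ) = 0 := by
        rw [hc]; rw [Multiset.count_eq_zero]
        intro hmem; have := hElt _ hmem; omega
      have hcp1 : c ((p:ℤ) - 1) = 0 := by
        rw [hc]; rw [Multiset.count_eq_zero]
        intro hmem; have := hElt _ hmem; omega
      have hcm1 : c (-1) = (hts l).count 0 := by
        rw [hc, hEshift]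
        show (Multiset.map (fun b => b + -1) (hts l)).count (-1) = _
        rw [count_map_shift]; norm_num
      -- R facts
      have hRcount : ∀ a : ℤ, R.count a = if 0 ≤ a ∧ a < p then 1 else 0 := count_range_coe p
      have hR0 : R.count 0 = 1 := by rw [hRcount]; simp; omega
      have hRp : R.count (p:ℤ) = 0 := by rw [hRcount]; simp
      -- abbreviations
      set T : ℕ := ((List.range p).map fun j : ℕ => c ((j:ℤ))).sum with hT
      have hq1 : (R.map fun a => R.count a).sum = p := by
        have : (R.map fun a => R.count a) = R.map fun _ => 1 :=
          Multiset.map_congr rfl (fun a ha => Multiset.count_eq_one_of_mem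
            ((Multiset.nodup_range p).map (fun u v h => by exact_mod_cast h)) ha)
        rw [this, Multiset.map_const', Multiset.sum_replicate, Multiset.card_map,
          Multiset.card_range, smul_eq_mul, mul_one]
      have hq2 : (R.map fun a => c a).sum = T := map_range_sum p c
      have hq3 : (E.map fun a => R.count a).sum = T := by rw [fub E R]; exact hq2
      -- count of 0 in H
      have hH0 : (hts (p :: l)).count 0 = 1 + c 0 := by
        rw [hH, Multiset.count_add, hR0]
      -- SS computation
      have hSS : SS (hts (p :: l)) = (p + T) + (T + SS E) := by
        rw [hH, SS_add_expand, hq1, hq2, hq3]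
        rfl
      -- SU parts
      have hu1 : (R.map fun a => R.count (a+1)).sum + R.count 0
          = (R.map fun a => R.count a).sum + R.count (p:ℤ) := by
        rw [map_range_sum p (fun a => R.count (a+1)), map_range_sum p (fun a => R.count a)]
        exact tele1 (fun a => R.count a) p
      have hu2 : (R.map fun a => c (a+1)).sum + c 0 = T + c (p:ℤ) := by
        rw [map_range_sum p (fun a => c (a+1))]
        exact tele1 c p
      have hRshift : ∀ a : ℤ, (R.map fun b => b + (-1)).count a = R.count (a + 1) := by
        intro a
        rw [count_map_shift]; congr 1 <;> omega
      have hu3 : (E.map fun a => R.count (a+1)).sum + c ((p:ℤ) - 1) = T + c (-1) := by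
        have h1 : (E.map fun a => R.count (a+1)) = E.map fun a => (R.map fun b => b + (-1)).count a :=
          Multiset.map_congr rfl (fun a _ => (hRshift a).symm)
        rw [h1, fub E (R.map fun b => b + (-1)), Multiset.map_map]
        have h2 : ((R.map fun b => b + (-1)).map c).sum = ((List.range p).map fun j : ℕ => c ((j:ℤ) - 1)).sum := by
          rw [Multiset.map_map, map_range_sum p]
          apply congrArg
          apply List.map_congr_left
          intro j _
          show c ((j:ℤ) + (-1)) = c ((j:ℤ) - 1)
          congr 1 <;> omega
        rw [Multiset.map_map] at h2
        rw [h2]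
        exact tele2 c p
      have hSU : SU (hts (p :: l)) = ((R.map fun a => R.count (a+1)).sum
          + (R.map fun a => c (a+1)).sum) + ((E.map fun a => R.count (a+1)).sum + SU E) := by
        rw [hH, SU_add_expand]
        rfl
      -- shifts
      have hSSE : SS E = SS (hts l) := by rw [hEshift]; exact SS_shift _ _
      have hSUE : SU E = SU (hts l) := by rw [hEshift]; exact SU_shift _ _
      have hIH := ih hsl hposl
      -- assemble
      omega

/-! ### Part B: bounds on multiplicities -/

lemma length_le_sum (l : List ℕ) (hpos : ∀ q ∈ l, 0 < q) : l.length ≤ l.sum := by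
  induction l with
  | nil => simp
  | cons p l ih =>
      simp only [List.length_cons, List.sum_cons]
      have h1 := hpos p (List.mem_cons_self)
      have h2 := ih (fun q hq => hpos q (List.mem_cons_of_mem _ hq))
      omega

lemma hts_card (l : List ℕ) : Multiset.card (hts l) = l.sum := by
  induction l with
  | nil => simp [hts]
  | cons p l ih =>
      rw [hts]
      simp [Multiset.card_map, Multiset.card_range, ih]

lemma count_top (l : List ℕ) : (hts l).count ((l.sum : ℤ) - 1) ≤ 1 := by
  cases l with
  | nil => simp [hts]
  | cons p l =>
      rw [hts, Multiset.count_add]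
      have h1 : (Multiset.map (fun j : ℕ => (j:ℤ)) (Multiset.range p)).count (((p::l).sum : ℤ) - 1) ≤ 1 := by
        rw [count_range_coe]; split <;> omega
      have h2 : ((hts l).map (· - 1)).count (((p::l).sum : ℤ) - 1) = 0 := by
        rw [Multiset.count_eq_zero]
        intro hmem
        rcases Multiset.mem_map.mp hmem with ⟨b, hb, hbe⟩
        have hbb := (hts_bounds hb).2
        simp only [List.sum_cons] at hbe
        omega
      omega

lemma count_bot : ∀ (l : List ℕ), (∀ q ∈ l, 0 < q) → (hts l).count (1 - (l.sum : ℤ)) ≤ 1 := by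
  intro l
  induction l with
  | nil => intro _; simp [hts]
  | cons p l ih =>
      intro hpos
      have hp1 : 1 ≤ p := hpos p (List.mem_cons_self)
      have hposl : ∀ q ∈ l, 0 < q := fun q hq => hpos q (List.mem_cons_of_mem _ hq)
      have hlen := length_le_sum l hposl
      rw [hts, Multiset.count_add]
      have hshift : ((hts l).map (· - 1)).count (1 - ((p::l).sum : ℤ))
          = (hts l).count (2 - ((p::l).sum : ℤ)) := by
        have h1 : ((hts l).map (· - 1)) = (hts l).map (fun b => b + (-1)) :=
          Multiset.map_congr rfl (fun b _ => by ring)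
        rw [h1, count_map_shift]
        congr 1
        ring
      rw [hshift]
      simp only [List.sum_cons]
      by_cases hp2 : 2 ≤ p
      · have hz1 : (Multiset.map (fun j : ℕ => (j:ℤ)) (Multiset.range p)).count
            (1 - ((p + l.sum : ℕ) : ℤ)) = 0 := by
          rw [count_range_coe]; split <;> omega
        have hz2 : (hts l).count (2 - ((p + l.sum : ℕ) : ℤ)) = 0 := by
          rw [Multiset.count_eq_zero]
          intro hmem
          have hbb := (hts_bounds hmem).1
          omega
        omega
      · have hpe : p = 1 := by omega
        subst hpe
        by_cases hm : l.sum = 0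
        · have hle : l = [] := by
            cases l with
            | nil => rfl
            | cons q l' =>
                exfalso
                have := hposl q (List.mem_cons_self)
                simp only [List.sum_cons] at hm
                omega
          subst hle
          simp [hts, count_range_coe]
        · have hz1 : (Multiset.map (fun j : ℕ => (j:ℤ)) (Multiset.range 1)).count
              (1 - ((1 + l.sum : ℕ) : ℤ)) = 0 := by
            rw [count_range_coe]; split <;> omega
          have h2 : (hts l).count (2 - ((1 + l.sum : ℕ) : ℤ)) ≤ 1 := by
            have he : (2 - ((1 + l.sum : ℕ) : ℤ)) = 1 - (l.sum : ℤ) := by push_cast; ring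
            rw [he]
            exact ih hposl
          omega

/-- `M.count (a-1)` summed is `SU`. -/
lemma SD_eq_SU (M : Multiset ℤ) : (M.map fun a => M.count (a - 1)).sum = SU M := by
  have h1 : (M.map fun a => M.count (a - 1)) = M.map fun a => (M.map (fun b => b + 1)).count a :=
    Multiset.map_congr rfl (fun a _ => by rw [count_map_shift])
  rw [h1, fub M (M.map (fun b => b + 1)), Multiset.map_map]
  rfl

/-! ### Part C: root system bookkeeping -/

lemma stdE_apply (n : ℕ) (i m : Fin n) : stdE n i m = if m = i then 1 else 0 := by
  rw [stdE, Pi.single_apply]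

lemma stdE_inj {n : ℕ} {i j : Fin n} (h : stdE n i = stdE n j) : i = j := by
  by_contra hne
  have hi := congrFun h i
  norm_num [stdE_apply, hne] at hi

lemma eval_stdE (n : ℕ) (i : Fin n) (x : Fin n → ℝ) : evalRoot n (stdE n i) x = x i := by
  unfold evalRoot
  rw [Finset.sum_eq_single i]
  · simp [stdE_apply]
  · intro b _ hb; simp [stdE_apply, hb]
  · intro h; exact absurd (Finset.mem_univ i) h

lemma eval_add (n : ℕ) (u v x : Fin n → ℝ) :
    evalRoot n (u + v) x = evalRoot n u x + evalRoot n v x := by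
  unfold evalRoot
  rw [← Finset.sum_add_distrib]
  apply Finset.sum_congr rfl
  intro i _
  simp [add_mul]

lemma eval_sub (n : ℕ) (u v x : Fin n → ℝ) :
    evalRoot n (u - v) x = evalRoot n u x - evalRoot n v x := by
  unfold evalRoot
  rw [← Finset.sum_sub_distrib]
  apply Finset.sum_congr rfl
  intro i _
  simp [sub_mul]

lemma eval_neg (n : ℕ) (u x : Fin n → ℝ) :
    evalRoot n (-u) x = -evalRoot n u x := by
  unfold evalRoot
  rw [← Finset.sum_neg_distrib]
  apply Finset.sum_congr rfl
  intro i _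
  simp

lemma not_short_sum {n : ℕ} {i j : Fin n} (hij : i ≠ j) :
    ¬∃ m : Fin n, stdE n i + stdE n j = stdE n m ∨ stdE n i + stdE n j = -stdE n m := by
  rintro ⟨m, h | h⟩
  · rcases eq_or_ne i m with rfl | him
    · have hj := congrFun h j
      norm_num [stdE_apply, Ne.symm hij] at hj
    · have hi := congrFun h i
      norm_num [stdE_apply, hij, him] at hi
  · rcases eq_or_ne i m with rfl | him
    · have hi := congrFun h i
      norm_num [stdE_apply, hij] at hi
    · have hi := congrFun h i
      norm_num [stdE_apply, hij, him] at hi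

lemma not_short_sub {n : ℕ} {i j : Fin n} (hij : i ≠ j) :
    ¬∃ m : Fin n, stdE n i - stdE n j = stdE n m ∨ stdE n i - stdE n j = -stdE n m := by
  rintro ⟨m, h | h⟩
  · have hj := congrFun h j
    rcases eq_or_ne j m with rfl | hjm
    · norm_num [stdE_apply, Ne.symm hij] at hj
    · norm_num [stdE_apply, Ne.symm hij, hjm] at hj
  · have hi := congrFun h i
    rcases eq_or_ne i m with rfl | him
    · norm_num [stdE_apply, hij] at hi
    · norm_num [stdE_apply, hij, him] at hi

lemma not_short_negsum {n : ℕ} {i j : Fin n} (hij : i ≠ j) :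
    ¬∃ m : Fin n, -(stdE n i + stdE n j) = stdE n m ∨ -(stdE n i + stdE n j) = -stdE n m := by
  rintro ⟨m, h | h⟩
  · have hi := congrFun h i
    rcases eq_or_ne i m with rfl | him
    · norm_num [stdE_apply, hij] at hi
    · norm_num [stdE_apply, hij, him] at hi
  · rcases eq_or_ne i m with rfl | him
    · have hj := congrFun h j
      norm_num [stdE_apply, Ne.symm hij] at hj
    · have hi := congrFun h i
      norm_num [stdE_apply, hij, him] at hi

lemma kBn_short (n : ℕ) (k₁ k₂ : ℝ) (i : Fin n) : kBn n k₁ k₂ (stdE n i) = k₂ :=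
  if_pos ⟨i, Or.inl rfl⟩

lemma kBn_short_neg (n : ℕ) (k₁ k₂ : ℝ) (i : Fin n) : kBn n k₁ k₂ (-stdE n i) = k₂ :=
  if_pos ⟨i, Or.inr rfl⟩

lemma kBn_sum {n : ℕ} (k₁ k₂ : ℝ) {i j : Fin n} (hij : i ≠ j) :
    kBn n k₁ k₂ (stdE n i + stdE n j) = k₁ := if_neg (not_short_sum hij)

lemma kBn_sub {n : ℕ} (k₁ k₂ : ℝ) {i j : Fin n} (hij : i ≠ j) :
    kBn n k₁ k₂ (stdE n i - stdE n j) = k₁ := if_neg (not_short_sub hij)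

lemma kBn_negsum {n : ℕ} (k₁ k₂ : ℝ) {i j : Fin n} (hij : i ≠ j) :
    kBn n k₁ k₂ (-(stdE n i + stdE n j)) = k₁ := if_neg (not_short_negsum hij)

lemma sub_stdE_inj {n : ℕ} {i j i' j' : Fin n} (hij : i ≠ j) (hij' : i' ≠ j')
    (h : stdE n i - stdE n j = stdE n i' - stdE n j') : i = i' ∧ j = j' := by
  have hii' : i = i' := by
    by_contra h1
    have hi := congrFun h i
    rcases eq_or_ne i j' with rfl | h2
    · norm_num [stdE_apply, hij, h1] at hi
    · norm_num [stdE_apply, hij, h1, h2] at hi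
  subst hii'
  refine ⟨rfl, ?_⟩
  by_contra h2
  have hj := congrFun h j
  norm_num [stdE_apply, Ne.symm hij, h2] at hj

lemma stdE_ne_sub {n : ℕ} {m i j : Fin n} (hij : i ≠ j) :
    stdE n m ≠ stdE n i - stdE n j := by
  intro h
  have hj := congrFun h j
  rcases eq_or_ne j m with rfl | hjm
  · norm_num [stdE_apply, Ne.symm hij] at hj
  · norm_num [stdE_apply, Ne.symm hij, hjm] at hj

/-! ### bridge between `heightCoords` and `hts` -/

lemma coe_list_map (l : List ℕ) : ((l : List ℕ) : List ℝ) = l.map (fun a : ℕ => (a:ℝ)) := by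
  show (l.flatMap fun a => [((a:ℕ):ℝ)]) = _
  induction l with
  | nil => rfl
  | cons p l ih => simp_all

lemma heightCoords_from (k₁ k₂ : ℝ) : ∀ (l : List ℕ) (m : ℕ),
    (↑((List.zipIdx l m).flatMap fun p =>
        (List.range p.1).map fun j => ((j : ℝ) - (p.2 : ℝ)) * k₁ + k₂) : Multiset ℝ)
      = ((hts l).map (fun a => a - (m:ℤ))).map (fun a : ℤ => (a:ℝ) * k₁ + k₂) := by
  intro l
  induction l with
  | nil => intro m; simp [hts]
  | cons p l ih =>
      intro m
      rw [List.zipIdx_cons, List.flatMap_cons, ← Multiset.coe_add, ih (m+1), hts]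
      rw [Multiset.map_add, Multiset.map_add]
      congr 1
      · have hR : Multiset.range p = ((List.range p : List ℕ) : Multiset ℕ) := rfl
        rw [hR, Multiset.map_coe, Multiset.map_coe, Multiset.map_coe]
        dsimp only
        rw [coe_list_map, List.map_map, List.map_map, List.map_map]
        apply congrArg
        apply List.map_congr_left
        intro j _
        show ((j:ℝ) - (m:ℝ)) * k₁ + k₂ = ((((j:ℤ) - (m:ℤ)) : ℤ) : ℝ) * k₁ + k₂
        push_cast
        ring
      · rw [Multiset.map_map, Multiset.map_map, Multiset.map_map]
        apply Multiset.map_congr rfl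
        intro b _
        show ((((b - (m+1:ℕ)) : ℤ)) : ℝ) * k₁ + k₂ = (((b - 1 - (m:ℤ)) : ℤ) : ℝ) * k₁ + k₂
        push_cast
        ring

lemma heightCoords_eq (k₁ k₂ : ℝ) (l : List ℕ) :
    heightCoords k₁ k₂ l = (hts l).map (fun a : ℤ => (a:ℝ) * k₁ + k₂) := by
  have h := heightCoords_from k₁ k₂ l 0
  rw [heightCoords]
  have henum : l.zipIdx = List.zipIdx l 0 := rfl
  rw [henum, h, Multiset.map_map]
  apply Multiset.map_congr rfl
  intro a _
  show ((((a - ((0:ℕ):ℤ)) : ℤ)) : ℝ) * k₁ + k₂ = ((a:ℤ):ℝ) * k₁ + k₂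
  push_cast
  ring

/-! ### main theorem body packaged as auxiliary lemmas -/

section MainAux

variable {n : ℕ} {k₁ k₂ : ℝ}

/-- From genericity: `m k₁ + 2 k₂ ≠ 0` whenever `|m| ≤ 2(n-1)`. -/
lemma generic_key (hn : 1 ≤ n) (hgen : BnGeneric n k₁ k₂) :
    ∀ m : ℤ, m.natAbs ≤ 2 * (n - 1) → ((m:ℝ) * k₁ + 2 * k₂) ≠ 0 := by
  rw [BnGeneric] at hgen
  have h12 : k₁ * k₂ ≠ 0 := fun h => hgen (by rw [h, zero_mul])
  have hk2 : k₂ ≠ 0 := fun h => h12 (by rw [h, mul_zero])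
  have hprod : (∏ j ∈ Finset.Icc 1 (2 * (n - 1)),
      (((j : ℝ) * k₁ + 2 * k₂) * ((j : ℝ) * k₁ - 2 * k₂))) ≠ 0 :=
    fun h => hgen (by rw [h, mul_zero])
  have hfac := Finset.prod_ne_zero_iff.mp hprod
  intro m hm h0
  rcases lt_trichotomy m 0 with hlt | heq | hgt
  · have hj : (-m).toNat ∈ Finset.Icc 1 (2 * (n - 1)) := by
      rw [Finset.mem_Icc]; omega
    have := hfac _ hj
    have hcast : (((-m).toNat : ℝ)) = -(m:ℝ) := by
      have : ((-m).toNat : ℤ) = -m := Int.toNat_of_nonneg (by omega)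
      exact_mod_cast this
    rw [hcast] at this
    apply this
    apply mul_eq_zero_of_right
    linarith
  · rw [heq] at h0; push_cast at h0; exact hk2 (by linarith)
  · have hj : m.toNat ∈ Finset.Icc 1 (2 * (n - 1)) := by
      rw [Finset.mem_Icc]; omega
    have := hfac _ hj
    have hcast : ((m.toNat : ℝ)) = (m:ℝ) := by
      have : (m.toNat : ℤ) = m := Int.toNat_of_nonneg (by omega)
      exact_mod_cast this
    rw [hcast] at this
    apply this
    apply mul_eq_zero_of_left
    linarith

end MainAux

theorem stmt_16 (n : ℕ) (hn : 1 ≤ n) (k₁ k₂ : ℝ) (hgen : BnGeneric n k₁ k₂)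
    (μ : List ℕ) (hμ : IsPartitionOf n μ) (x : Fin n → ℝ) (hx : IsLambdaVec n k₁ k₂ μ x) :
    {α ∈ rootsBn n | evalRoot n α x = kBn n k₁ k₂ α}.ncard
      = {α ∈ rootsBn n | evalRoot n α x = 0}.ncard + n := by
  classical
  obtain ⟨hsort, hpos, hsum⟩ := hμ
  set H : Multiset ℤ := hts μ with hHdef
  set φ : ℤ → ℝ := fun a => (a:ℝ) * k₁ + k₂ with hφ
  have hkey := generic_key hn hgen
  have hk1 : k₁ ≠ 0 := by
    rw [BnGeneric] at hgen
    intro h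
    exact hgen (by rw [h, zero_mul, zero_mul])
  have hφinj : Function.Injective φ := by
    intro a b hab
    simp only [hφ] at hab
    have h1 : ((a:ℝ) - b) * k₁ = 0 := by linarith
    rcases mul_eq_zero.mp h1 with h | h
    · have : (a:ℝ) = b := by linarith
      exact_mod_cast this
    · exact absurd h hk1
  set C : Multiset ℝ := (↑(List.ofFn x) : Multiset ℝ) with hCdef
  have hC : C = H.map φ := by
    rw [IsLambdaVec] at hx
    rw [hCdef, hx, heightCoords_eq, hHdef, hφ]
  have hCm : C = Multiset.map x Finset.univ.val := by rw [hCdef, List.ofFn_eq_map]; rfl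
  have hmem : ∀ i, ∃ a ∈ H, x i = φ a := by
    intro i
    have hxi : x i ∈ C := by rw [hCdef, Multiset.mem_coe, List.mem_ofFn]; exact ⟨i, rfl⟩
    rw [hC] at hxi
    rcases Multiset.mem_map.mp hxi with ⟨a, ha, hae⟩
    exact ⟨a, ha, hae.symm⟩
  have hbd : ∀ a ∈ H, -(n:ℤ) < a ∧ a < n := by
    intro a ha
    have h1 := hts_bounds ha
    have h2 := length_le_sum μ hpos
    omega
  -- counting
  have hcountC : ∀ v : ℝ, (Finset.univ.filter fun i => x i = v).card = C.count v := by
    intro v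
    rw [hCm, Multiset.count_map, Finset.card, Finset.filter_val]
    congr 1
    exact Multiset.filter_congr (fun i _ => eq_comm)
  have hcnt_eq : ∀ a : ℤ, C.count (φ a) = H.count a := by
    intro a; rw [hC]; exact Multiset.count_map_eq_count' φ H hφinj a
  -- nonvanishing facts
  have hxne0 : ∀ i, x i ≠ 0 := by
    intro i h
    obtain ⟨a, ha, hxa⟩ := hmem i
    have hb := hbd a ha
    apply hkey (2*a) (by omega)
    rw [hxa] at h
    simp only [hφ] at h
    push_cast
    linarith
  have hxnem : ∀ i, x i ≠ -k₂ := by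
    intro i h
    obtain ⟨a, ha, hxa⟩ := hmem i
    have hb := hbd a ha
    apply hkey a (by omega)
    rw [hxa] at h
    simp only [hφ] at h
    linarith
  have hsum0 : ∀ i j, x i + x j ≠ 0 := by
    intro i j h
    obtain ⟨a, ha, hxa⟩ := hmem i
    obtain ⟨b, hb, hxb⟩ := hmem j
    have hba := hbd a ha
    have hbb := hbd b hb
    apply hkey (a + b) (by omega)
    rw [hxa, hxb] at h
    simp only [hφ] at h
    push_cast
    linarith
  have hcnt2 : ∀ i j, i ≠ j → x i = x j → 2 ≤ C.count (x i) := by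
    intro i j hij hxx
    have hsub : ({i, j} : Finset (Fin n)) ⊆ Finset.univ.filter (fun m => x m = x i) := by
      intro m hm
      rcases Finset.mem_insert.mp hm with rfl | hm
      · exact Finset.mem_filter.mpr ⟨Finset.mem_univ _, rfl⟩
      · rw [Finset.mem_singleton] at hm
        subst hm
        exact Finset.mem_filter.mpr ⟨Finset.mem_univ _, hxx.symm⟩
    calc 2 = ({i, j} : Finset (Fin n)).card := (Finset.card_pair hij).symm
      _ ≤ (Finset.univ.filter (fun m => x m = x i)).card := Finset.card_le_card hsub
      _ = C.count (x i) := hcountC (x i)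
  have hsumk : ∀ i j, i ≠ j → x i + x j ≠ k₁ := by
    intro i j hij h
    obtain ⟨a, ha, hxa⟩ := hmem i
    obtain ⟨b, hb, hxb⟩ := hmem j
    have hba := hbd a ha
    have hbb := hbd b hb
    by_cases hext : a = 1 - (n:ℤ) ∧ b = 1 - (n:ℤ)
    · obtain ⟨ha1, hb1⟩ := hext
      have hxx : x i = x j := by rw [hxa, hxb, ha1, hb1]
      have h2 := hcnt2 i j hij hxx
      have h1 : C.count (x i) ≤ 1 := by
        rw [hxa, ha1, hcnt_eq (1 - (n:ℤ))]
        have hcb := count_bot μ hpos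
        rw [hsum] at hcb
        exact hcb
      omega
    · apply hkey (a + b - 1) (by omega)
      rw [hxa, hxb] at h
      simp only [hφ] at h
      push_cast
      linarith
  have hsumk' : ∀ i j, i ≠ j → x i + x j ≠ -k₁ := by
    intro i j hij h
    obtain ⟨a, ha, hxa⟩ := hmem i
    obtain ⟨b, hb, hxb⟩ := hmem j
    have hba := hbd a ha
    have hbb := hbd b hb
    by_cases hext : a = (n:ℤ) - 1 ∧ b = (n:ℤ) - 1
    · obtain ⟨ha1, hb1⟩ := hext
      have hxx : x i = x j := by rw [hxa, hxb, ha1, hb1]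
      have h2 := hcnt2 i j hij hxx
      have h1 : C.count (x i) ≤ 1 := by
        rw [hxa, ha1, hcnt_eq ((n:ℤ) - 1)]
        have hcb := count_top μ
        rw [hsum] at hcb
        exact hcb
      omega
    · apply hkey (a + b + 1) (by omega)
      rw [hxa, hxb] at h
      simp only [hφ] at h
      push_cast
      linarith
  -- the index Finsets
  set t₁ : Finset (Fin n) := Finset.univ.filter (fun i => x i = k₂) with ht₁def
  set t₂ : Finset (Fin n × Fin n) :=
    Finset.univ.filter (fun q => q.1 ≠ q.2 ∧ x q.1 = x q.2 + k₁) with ht₂def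
  set t₃ : Finset (Fin n × Fin n) :=
    Finset.univ.filter (fun q => q.1 ≠ q.2 ∧ x q.1 = x q.2) with ht₃def
  -- pair-count via multiset counts
  have hpair : ∀ r : ℝ, (Finset.univ.filter fun q : Fin n × Fin n => x q.1 = x q.2 + r).card
      = (C.map fun c => C.count (c - r)).sum := by
    intro r
    rw [Finset.card_filter, Fintype.sum_prod_type]
    have hinner : ∀ i : Fin n, (∑ j, if x i = x j + r then (1:ℕ) else 0) = C.count (x i - r) := by
      intro i
      rw [← hcountC (x i - r), Finset.card_filter]
      apply Finset.sum_congr rfl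
      intro j _
      have hiff : (x i = x j + r) ↔ (x j = x i - r) := by constructor <;> intro <;> linarith
      exact if_congr hiff rfl rfl
    rw [Finset.sum_congr rfl (fun i _ => hinner i), hCm, Multiset.map_map]
    rfl
  -- card t₁
  have ht1 : t₁.card = H.count 0 := by
    rw [ht₁def, hcountC k₂]
    have h0 : φ 0 = k₂ := by simp [hφ]
    rw [← h0, hcnt_eq]
  -- card t₂
  have ht2 : t₂.card = SU H := by
    have e1 : t₂ = Finset.univ.filter (fun q : Fin n × Fin n => x q.1 = x q.2 + k₁) := by
      rw [ht₂def]
      apply Finset.filter_congr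
      intro q _
      constructor
      · exact fun h => h.2
      · intro h
        refine ⟨?_, h⟩
        intro hq
        rw [hq] at h
        have : k₁ = 0 := by linarith
        exact hk1 this
    rw [e1, hpair k₁, hC, Multiset.map_map]
    have e2 : (H.map ((fun c => Multiset.count (c - k₁) (Multiset.map φ H)) ∘ φ))
        = H.map fun a => H.count (a - 1) := by
      apply Multiset.map_congr rfl
      intro a _
      show (Multiset.map φ H).count (φ a - k₁) = H.count (a - 1)
      have hphi : φ a - k₁ = φ (a - 1) := by simp only [hφ]; push_cast; ring
      rw [hphi]
      exact Multiset.count_map_eq_count' φ H hφinj _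
    rw [e2, SD_eq_SU]
  -- diagonal and splitting
  have hdiag : (Finset.univ.filter fun q : Fin n × Fin n => q.1 = q.2).card = n := by
    rw [Finset.card_filter, Fintype.sum_prod_type]
    simp [Finset.sum_ite_eq]
  have ht3' : (Finset.univ.filter fun q : Fin n × Fin n => x q.1 = x q.2).card = SS H := by
    have e0 : (Finset.univ.filter fun q : Fin n × Fin n => x q.1 = x q.2)
        = Finset.univ.filter fun q : Fin n × Fin n => x q.1 = x q.2 + 0 := by
      apply Finset.filter_congr; intro q _; rw [add_zero]
    rw [e0, hpair 0, hC, Multiset.map_map]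
    show (H.map ((fun c => Multiset.count (c - 0) (Multiset.map φ H)) ∘ φ)).sum
        = (H.map fun a => H.count a).sum
    apply congrArg
    apply Multiset.map_congr rfl
    intro a _
    show (Multiset.map φ H).count (φ a - 0) = H.count a
    rw [sub_zero]
    exact Multiset.count_map_eq_count' φ H hφinj a
  have hsplit : (Finset.univ.filter fun q : Fin n × Fin n => x q.1 = x q.2).card
      = t₃.card + (Finset.univ.filter fun q : Fin n × Fin n => q.1 = q.2).card := by
    rw [ht₃def, Finset.card_filter, Finset.card_filter, Finset.card_filter,
      ← Finset.sum_add_distrib]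
    apply Finset.sum_congr rfl
    intro q _
    by_cases h1 : q.1 = q.2
    · simp [h1]
    · by_cases h2 : x q.1 = x q.2 <;> simp [h1, h2]
  -- classification of the two root sets
  have hAset : {α ∈ rootsBn n | evalRoot n α x = kBn n k₁ k₂ α}
      = (fun i : Fin n => stdE n i) '' ↑t₁
        ∪ (fun q : Fin n × Fin n => stdE n q.1 - stdE n q.2) '' ↑t₂ := by
    ext α
    constructor
    · rintro ⟨hr, he⟩
      rcases hr with ⟨i, j, hij, rfl | rfl | rfl⟩ | ⟨i, rfl | rfl⟩
      · rw [eval_add, eval_stdE, eval_stdE, kBn_sum k₁ k₂ hij] at he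
        exact absurd he (hsumk i j hij)
      · right
        rw [eval_sub, eval_stdE, eval_stdE, kBn_sub k₁ k₂ hij] at he
        refine ⟨(i, j), ?_, rfl⟩
        rw [Finset.mem_coe, ht₂def, Finset.mem_filter]
        exact ⟨Finset.mem_univ _, hij, by linarith⟩
      · rw [eval_neg, eval_add, eval_stdE, eval_stdE, kBn_negsum k₁ k₂ hij] at he
        have : x i + x j = -k₁ := by linarith
        exact absurd this (hsumk' i j hij)
      · left
        rw [eval_stdE, kBn_short] at he
        refine ⟨i, ?_, rfl⟩
        rw [Finset.mem_coe, ht₁def, Finset.mem_filter]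
        exact ⟨Finset.mem_univ _, he⟩
      · rw [eval_neg, eval_stdE, kBn_short_neg] at he
        have : x i = -k₂ := by linarith
        exact absurd this (hxnem i)
    · rintro (⟨i, hi, rfl⟩ | ⟨q, hq, rfl⟩)
      · rw [Finset.mem_coe, ht₁def, Finset.mem_filter] at hi
        refine ⟨Or.inr ⟨i, Or.inl rfl⟩, ?_⟩
        rw [eval_stdE, kBn_short]
        exact hi.2
      · rw [Finset.mem_coe, ht₂def, Finset.mem_filter] at hq
        obtain ⟨-, hij, hxq⟩ := hq
        refine ⟨Or.inl ⟨q.1, q.2, hij, Or.inr (Or.inl rfl)⟩, ?_⟩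
        rw [eval_sub, eval_stdE, eval_stdE, kBn_sub k₁ k₂ hij]
        linarith
  have hBset : {α ∈ rootsBn n | evalRoot n α x = 0}
      = (fun q : Fin n × Fin n => stdE n q.1 - stdE n q.2) '' ↑t₃ := by
    ext α
    constructor
    · rintro ⟨hr, he⟩
      rcases hr with ⟨i, j, hij, rfl | rfl | rfl⟩ | ⟨i, rfl | rfl⟩
      · rw [eval_add, eval_stdE, eval_stdE] at he
        exact absurd he (hsum0 i j)
      · rw [eval_sub, eval_stdE, eval_stdE] at he
        refine ⟨(i, j), ?_, rfl⟩
        rw [Finset.mem_coe, ht₃def, Finset.mem_filter]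
        exact ⟨Finset.mem_univ _, hij, by linarith⟩
      · rw [eval_neg, eval_add, eval_stdE, eval_stdE] at he
        have : x i + x j = 0 := by linarith
        exact absurd this (hsum0 i j)
      · rw [eval_stdE] at he
        exact absurd he (hxne0 i)
      · rw [eval_neg, eval_stdE] at he
        have : x i = 0 := by linarith
        exact absurd this (hxne0 i)
    · rintro ⟨q, hq, rfl⟩
      rw [Finset.mem_coe, ht₃def, Finset.mem_filter] at hq
      obtain ⟨-, hij, hxq⟩ := hq
      refine ⟨Or.inl ⟨q.1, q.2, hij, Or.inr (Or.inl rfl)⟩, ?_⟩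
      rw [eval_sub, eval_stdE, eval_stdE]
      linarith
  -- cardinalities of the root sets
  have hAcard : {α ∈ rootsBn n | evalRoot n α x = kBn n k₁ k₂ α}.ncard
      = t₁.card + t₂.card := by
    rw [hAset]
    have hdisj : Disjoint ((fun i : Fin n => stdE n i) '' ↑t₁)
        ((fun q : Fin n × Fin n => stdE n q.1 - stdE n q.2) '' ↑t₂) := by
      rw [Set.disjoint_left]
      rintro α ⟨i, hi, rfl⟩ ⟨q, hq, hqe⟩
      rw [Finset.mem_coe, ht₂def, Finset.mem_filter] at hq
      exact stdE_ne_sub hq.2.1 hqe.symm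
    rw [Set.ncard_union_eq hdisj (t₁.finite_toSet.image _) (t₂.finite_toSet.image _)]
    rw [Set.ncard_image_of_injOn (fun i _ j _ h => stdE_inj h)]
    have hinj2 : Set.InjOn (fun q : Fin n × Fin n => stdE n q.1 - stdE n q.2) ↑t₂ := by
      intro q hq q' hq' h
      rw [Finset.mem_coe, ht₂def, Finset.mem_filter] at hq hq'
      obtain ⟨h1, h2⟩ := sub_stdE_inj hq.2.1 hq'.2.1 h
      exact Prod.ext h1 h2
    rw [Set.ncard_image_of_injOn hinj2, Set.ncard_coe_finset, Set.ncard_coe_finset]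
  have hBcard : {α ∈ rootsBn n | evalRoot n α x = 0}.ncard = t₃.card := by
    rw [hBset]
    have hinj3 : Set.InjOn (fun q : Fin n × Fin n => stdE n q.1 - stdE n q.2) ↑t₃ := by
      intro q hq q' hq' h
      rw [Finset.mem_coe, ht₃def, Finset.mem_filter] at hq hq'
      obtain ⟨h1, h2⟩ := sub_stdE_inj hq.2.1 hq'.2.1 h
      exact Prod.ext h1 h2
    rw [Set.ncard_image_of_injOn hinj3, Set.ncard_coe_finset]
  -- conclusion
  have hKI := keyIdentity μ hsort hpos
  rw [← hHdef] at hKI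
  rw [hAcard, hBcard]
  omega


end
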